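/- Let V ⊆ R^m be an r-dimensional subspace and φ ⊆ [m] with #φ = r+1 and dim π_φ(V) = r. Then π_φ(V) is a hyperplane in R^φ ≅ R^{r+1}, and the vector h ∈ R^{r+1} with k-th entry (−1)^{k−1}[φ \ {i_k}]_V (where φ = {i_1 < ... < i_{r+1}} and [·]_V are Plücker coordinates w.r.t. a fixed basis of V) is nonzero and orthogonal to π_φ(V), i.e., h is a normal vector of the hyperplane π_φ(V). -/

import Mathlib

open Matrix Finset

/-- Coordinate projection onto the coordinates indexed by `ψ`. -/
noncomputable def proj {m : ℕ} (ψ : Finset (Fin m)) :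
    ((Fin m) → ℝ) →ₗ[ℝ] ({i // i ∈ ψ} → ℝ) :=
  LinearMap.funLeft ℝ ℝ Subtype.val

/-- `B` is a basis matrix of `V`: its columns are linearly independent and span `V`. -/
def IsBasisMatrixOf {m r : ℕ} (B : Matrix (Fin m) (Fin r) ℝ)
    (V : Submodule ℝ (Fin m → ℝ)) : Prop :=
  LinearIndependent ℝ (fun j : Fin r => fun i : Fin m => B i j) ∧
    Submodule.span ℝ (Set.range (fun j : Fin r => fun i : Fin m => B i j)) = V

/-- Plücker coordinate: the `k×k` minor of `B` with rows indexed by `ψ`. -/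
noncomputable def pluck {m k : ℕ} (B : Matrix (Fin m) (Fin k) ℝ)
    (ψ : Finset (Fin m)) (h : ψ.card = k) : ℝ :=
  (B.submatrix (fun i : Fin k => ((ψ.orderIsoOfFin h i : Fin m))) id).det


theorem stmt19 {m r : ℕ} (V : Submodule ℝ (Fin m → ℝ))
    (hV : Module.finrank ℝ V = r)
    (B : Matrix (Fin m) (Fin r) ℝ) (hB : IsBasisMatrixOf B V)
    (φ : Finset (Fin m)) (hφ : φ.card = r + 1)
    (hφV : Module.finrank ℝ (V.map (proj φ)) = r)
    (h : Fin (r + 1) → ℝ)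
    (hh : ∀ k : Fin (r + 1), h k =
      (-1 : ℝ) ^ (k : ℕ) *
        pluck B (φ.erase ((φ.orderIsoOfFin hφ k : Fin m)))
          (by simp [Finset.card_erase_of_mem (Finset.coe_mem _), hφ])) :
    h ≠ 0 ∧ ∀ v ∈ V, ∑ k : Fin (r + 1), h k * v ((φ.orderIsoOfFin hφ k : Fin m)) = 0 := by
  classical
  set e : Fin (r + 1) → Fin m := fun i => (φ.orderIsoOfFin hφ i : Fin m) with he
  have heEmb : e = fun i => φ.orderEmbOfFin hφ i := by
    funext i; rfl
  -- the submatrix of B with rows φ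
  set A : Matrix (Fin (r + 1)) (Fin r) ℝ := fun i j => B (e i) j with hA
  -- identify the erased-set minor with a row-deleted minor of A
  have minor_eq : ∀ k : Fin (r + 1),
      pluck B (φ.erase (e k))
        (by rw [Finset.card_erase_of_mem (by simp [he])]; omega) =
      Matrix.det (fun a b => A (k.succAbove a) b) := by
    intro k
    have hcard : (φ.erase (e k)).card = r := by
      simp [Finset.card_erase_of_mem, hφ, he]
    have hf : (fun j : Fin r => e (k.succAbove j)) =
        (φ.erase (e k)).orderEmbOfFin hcard := by
      apply Finset.orderEmbOfFin_unique
      · intro x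
        refine Finset.mem_erase.2 ⟨?_, ?_⟩
        · intro hx
          exact (Fin.succAbove_ne k x) ((φ.orderIsoOfFin hφ).injective
            (by exact Subtype.ext hx))
        · rw [heEmb]; exact Finset.orderEmbOfFin_mem _ _ _
      · intro a b hab
        rw [heEmb]
        exact (φ.orderEmbOfFin hφ).strictMono ((Fin.strictMono_succAbove k) hab)
    unfold pluck
    congr 1
    ext a b
    simp only [Matrix.submatrix_apply, id]
    have : ((φ.erase (e k)).orderIsoOfFin hcard a : Fin m) =
        (φ.erase (e k)).orderEmbOfFin hcard a := rfl
    rw [this, ← hf]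
  -- the key determinant identity
  set M : (Fin (r + 1) → ℝ) → Matrix (Fin (r + 1)) (Fin (r + 1)) ℝ :=
    fun w => Matrix.of fun i j => Fin.cases (w i) (fun j' => A i j') j with hM
  have det_M : ∀ w : Fin (r + 1) → ℝ,
      (M w).det = ∑ k : Fin (r + 1), h k * w k := by
    intro w
    rw [Matrix.det_succ_column_zero]
    refine Finset.sum_congr rfl fun k _ => ?_
    have h1 : (M w) k 0 = w k := rfl
    have h2 : ((M w).submatrix k.succAbove Fin.succ) = fun a b => A (k.succAbove a) b := by
      ext a b; rfl
    rw [h1, h2, hh k, minor_eq k]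
    ring
  obtain ⟨hBli, hBspan⟩ := hB
  -- columns of A
  set fam : Fin r → (Fin (r + 1) → ℝ) := fun j => fun i => A i j with hfam
  -- det (M w) = 0 when w comes from v ∈ V
  have hdet0 : ∀ v ∈ V, (M (fun i => v (e i))).det = 0 := by
    intro v hv
    rw [← hBspan] at hv
    obtain ⟨c, hc⟩ := (Submodule.mem_span_range_iff_exists_fun ℝ).1 hv
    rw [← Matrix.exists_mulVec_eq_zero_iff]
    refine ⟨Fin.cons (-1) (fun j => c j), ?_, ?_⟩
    · intro h0
      have := congrFun h0 0
      simp at this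
    · funext i
      have hvi : v (e i) = ∑ j : Fin r, c j * A i j := by
        have h' := congrFun hc (e i)
        simp only [Finset.sum_apply, Pi.smul_apply, smul_eq_mul] at h'
        exact h'.symm
      simp only [Matrix.mulVec, dotProduct]
      rw [Fin.sum_univ_succ]
      simp only [Fin.cons_zero, Fin.cons_succ]
      have hM0 : (M (fun i => v (e i))) i 0 = v (e i) := rfl
      have hMs : ∀ j : Fin r, (M (fun i => v (e i))) i j.succ = A i j := fun j => rfl
      rw [hM0]
      simp only [hMs, Pi.zero_apply]
      rw [hvi]
      ring_nf
      rw [neg_add_eq_zero]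
      exact Finset.sum_congr rfl fun j _ => mul_comm _ _
  -- linear independence of the columns of A
  have hli : LinearIndependent ℝ fam := by
    rw [linearIndependent_iff_card_eq_finrank_span]
    set eq : Fin (r + 1) ≃ {x // x ∈ φ} := (φ.orderIsoOfFin hφ).toEquiv with heq
    set L : ({x // x ∈ φ} → ℝ) ≃ₗ[ℝ] (Fin (r + 1) → ℝ) :=
      LinearEquiv.funCongrLeft ℝ ℝ eq with hL
    have hfam' : fam = fun j => L ((proj φ) (fun i => B i j)) := by
      funext j; rfl
    have : Submodule.span ℝ (Set.range fam) =
        Submodule.map (L : ({x // x ∈ φ} → ℝ) →ₗ[ℝ] (Fin (r + 1) → ℝ))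
          (V.map (proj φ)) := by
      rw [hfam', ← hBspan, Submodule.map_span, Submodule.map_span]
      congr 1
      ext x
      simp only [Set.mem_range, Set.mem_image]
      constructor
      · rintro ⟨j, rfl⟩; exact ⟨_, ⟨_, ⟨j, rfl⟩, rfl⟩, rfl⟩
      · rintro ⟨_, ⟨_, ⟨j, rfl⟩, rfl⟩, rfl⟩; exact ⟨j, rfl⟩
    rw [Set.finrank, this, LinearEquiv.finrank_map_eq, hφV, Fintype.card_fin]
  -- pick a vector outside the span of the columns of A
  have hne : Submodule.span ℝ (Set.range fam) ≠ ⊤ := by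
    intro htop
    have h1 : Module.finrank ℝ (Submodule.span ℝ (Set.range fam)) ≤ r := by
      have := finrank_span_le_card (R := ℝ) (Set.range fam)
      calc Module.finrank ℝ (Submodule.span ℝ (Set.range fam))
          ≤ (Set.range fam).toFinset.card := this
        _ ≤ Fintype.card (Fin r) := by
            rw [Set.toFinset_range]
            exact (Finset.card_image_le).trans (by simp)
        _ = r := Fintype.card_fin r
    rw [htop] at h1
    simp [finrank_top, Module.finrank_fin_fun] at h1
  obtain ⟨w, hw⟩ : ∃ w, w ∉ Submodule.span ℝ (Set.range fam) := by
    by_contra hcon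
    push_neg at hcon
    exact hne (Submodule.eq_top_iff'.2 hcon)
  have hcons : LinearIndependent ℝ (Fin.cons w fam : Fin (r + 1) → Fin (r + 1) → ℝ) :=
    hli.fin_cons hw
  have hdetw : (M w).det ≠ 0 := by
    have hcols : (fun j => (M w)ᵀ j) = (Fin.cons w fam : Fin (r + 1) → Fin (r + 1) → ℝ) := by
      funext j
      refine Fin.cases ?_ (fun j' => ?_) j <;> rfl
    have : IsUnit (M w) := Matrix.linearIndependent_cols_iff_isUnit.1
      (hcols ▸ hcons : LinearIndependent ℝ (fun j => (M w)ᵀ j))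
    exact ((Matrix.isUnit_iff_isUnit_det _).1 this).ne_zero
  constructor
  · intro h0
    apply hdetw
    rw [det_M, h0]
    simp
  · intro v hv
    have := hdet0 v hv
    rw [det_M] at this
    exact this
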